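/- Let a < b be reals, let V be a compact subset of C([a,b]) with the sup-norm, and for each positive integer m let L_m be the piecewise linear interpolation operator at the uniform nodes x_j = a + j(b−a)/m. Set U_m = L_m(V), W_m = V ∪ U_m, and W = ⋃_{i=1}^∞ W_i. Then W is a compact subset of C([a,b]). -/

import Mathlib

/-- The uniform nodes `x_j = a + j(b−a)/m`, `j = 0, …, m`, of `[a,b]`. -/
noncomputable def node (a b : ℝ) (m j : ℕ) : ℝ := a + j * (b - a) / m

/-- `L` is the piecewise linear interpolation operator on `C([a,b])` at the uniform
nodes `x_j = a + j(b−a)/m`: for `x ∈ [x_j, x_{j+1}]`, `j = 0, …, m−1`,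
`(L u)(x) = u(x_j) + ((u(x_{j+1}) − u(x_j))/(x_{j+1} − x_j))(x − x_j)`. -/
def IsLinInterp (a b : ℝ) (hab : a ≤ b) (m : ℕ)
    (L : C(Set.Icc a b, ℝ) → C(Set.Icc a b, ℝ)) : Prop :=
  ∀ u : C(Set.Icc a b, ℝ), ∀ j : ℕ, j < m →
    ∀ x : Set.Icc a b, node a b m j ≤ (x : ℝ) → (x : ℝ) ≤ node a b m (j + 1) →
      L u x = u (Set.projIcc a b hab (node a b m j)) +
        (u (Set.projIcc a b hab (node a b m (j + 1))) -
            u (Set.projIcc a b hab (node a b m j))) /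
          (node a b m (j + 1) - node a b m j) * ((x : ℝ) - node a b m j)

open Filter Topology

/-- Every point of `[a,b]` lies in some node interval. -/
lemma exists_node_interval (a b : ℝ) (hab : a < b) {i : ℕ} (hi : 0 < i)
    {x : ℝ} (hx : x ∈ Set.Icc a b) :
    ∃ j : ℕ, j < i ∧ node a b i j ≤ x ∧ x ≤ node a b i (j + 1) := by
  have hipos : (0:ℝ) < i := by exact_mod_cast hi
  have hba : (0:ℝ) < b - a := by linarith [hab]
  set h : ℝ := (b - a) / i with hh
  have hhpos : 0 < h := div_pos hba hipos
  set r : ℝ := (x - a) / h with hr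
  have hr0 : 0 ≤ r := div_nonneg (by linarith [hx.1]) hhpos.le
  set j : ℕ := min ⌊r⌋₊ (i - 1) with hjdef
  have hji : j < i := lt_of_le_of_lt (min_le_right _ _) (Nat.sub_lt hi one_pos)
  have hnode : ∀ k : ℕ, node a b i k = a + k * h := by
    intro k; unfold node; rw [hh, mul_div_assoc]
  refine ⟨j, hji, ?_, ?_⟩
  · have hj : (j : ℝ) ≤ r := by
      calc (j : ℝ) ≤ (⌊r⌋₊ : ℝ) := by exact_mod_cast min_le_left _ _
        _ ≤ r := Nat.floor_le hr0
    have h1 : (j : ℝ) * h ≤ r * h := mul_le_mul_of_nonneg_right hj hhpos.le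
    have h2 : r * h = x - a := by rw [hr, div_mul_cancel₀ _ hhpos.ne']
    rw [hnode j]
    linarith
  · have hkey : r ≤ (j : ℝ) + 1 := by
      rcases le_or_gt ⌊r⌋₊ (i - 1) with hc | hc
      · have : j = ⌊r⌋₊ := min_eq_left hc
        rw [this]
        exact (Nat.lt_floor_add_one r).le
      · have hjeq : j = i - 1 := min_eq_right hc.le
        have hri : r ≤ i := by
          rw [hr, div_le_iff₀ hhpos]
          have : (i : ℝ) * h = b - a := by rw [hh]; field_simp
          linarith [hx.2]
        have : ((j : ℕ) : ℝ) + 1 = (i : ℝ) := by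
          rw [hjeq]
          have h1 : (1:ℕ) ≤ i := hi
          push_cast [Nat.cast_sub h1]
          ring
        linarith
    have h1 : r * h ≤ ((j : ℝ) + 1) * h := mul_le_mul_of_nonneg_right hkey hhpos.le
    have h2 : r * h = x - a := by rw [hr, div_mul_cancel₀ _ hhpos.ne']
    rw [hnode (j+1)]
    push_cast
    linarith

lemma node_mem_Icc (a b : ℝ) (hab : a < b) {i j : ℕ} (hi : 0 < i) (hj : j ≤ i) :
    node a b i j ∈ Set.Icc a b := by
  have hipos : (0:ℝ) < i := by exact_mod_cast hi
  have hba : (0:ℝ) < b - a := by linarith [hab]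
  have hji : (j : ℝ) ≤ i := by exact_mod_cast hj
  constructor
  · unfold node
    have : 0 ≤ (j : ℝ) * (b - a) / i :=
      div_nonneg (mul_nonneg (Nat.cast_nonneg j) hba.le) hipos.le
    linarith
  · unfold node
    have : (j : ℝ) * (b - a) / i ≤ b - a := by
      rw [div_le_iff₀ hipos]
      nlinarith [hji, hba]
    linarith

/-- Structural representation of `L u x` as a convex combination. -/
lemma rep (a b : ℝ) (hab : a < b) {i : ℕ} (hi : 0 < i)
    {L : C(Set.Icc a b, ℝ) → C(Set.Icc a b, ℝ)} (hL : IsLinInterp a b hab.le i L)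
    (x : Set.Icc a b) :
    ∃ t : ℝ, ∃ p q : Set.Icc a b, 0 ≤ t ∧ t ≤ 1 ∧
      dist p x ≤ (b - a) / i ∧ dist q x ≤ (b - a) / i ∧
      ∀ v : C(Set.Icc a b, ℝ), L v x = (1 - t) * v p + t * v q := by
  have hipos : (0:ℝ) < i := by exact_mod_cast hi
  have hba : (0:ℝ) < b - a := by linarith [hab]
  have hhpos : 0 < (b - a) / i := div_pos hba hipos
  obtain ⟨j, hji, hx1, hx2⟩ := exists_node_interval a b hab hi x.2
  have hdiff : node a b i (j + 1) - node a b i j = (b - a) / i := by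
    unfold node
    push_cast
    ring
  have hmemj : node a b i j ∈ Set.Icc a b := node_mem_Icc a b hab hi hji.le
  have hmemj1 : node a b i (j + 1) ∈ Set.Icc a b := node_mem_Icc a b hab hi hji
  set p := Set.projIcc a b hab.le (node a b i j) with hp
  set q := Set.projIcc a b hab.le (node a b i (j + 1)) with hq
  have hpc : (p : ℝ) = node a b i j := by rw [hp, Set.projIcc_of_mem hab.le hmemj]
  have hqc : (q : ℝ) = node a b i (j + 1) := by rw [hq, Set.projIcc_of_mem hab.le hmemj1]
  refine ⟨((x:ℝ) - node a b i j) / ((b - a) / i), p, q, ?_, ?_, ?_, ?_, ?_⟩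
  · exact div_nonneg (by linarith) hhpos.le
  · rw [div_le_one hhpos]
    linarith [hdiff]
  · rw [Subtype.dist_eq, hpc, Real.dist_eq, abs_of_nonpos (by linarith)]
    linarith [hdiff]
  · rw [Subtype.dist_eq, hqc, Real.dist_eq, abs_of_nonneg (by linarith [hdiff])]
    linarith [hdiff]
  · intro v
    rw [hL v j hji x hx1 hx2, hdiff]
    field_simp
    ring

/-- The interpolation operator is nonexpansive. -/
lemma lin_interp_lipschitz (a b : ℝ) (hab : a < b) {i : ℕ} (hi : 0 < i)
    {L : C(Set.Icc a b, ℝ) → C(Set.Icc a b, ℝ)} (hL : IsLinInterp a b hab.le i L)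
    (u v : C(Set.Icc a b, ℝ)) : dist (L u) (L v) ≤ dist u v := by
  rw [ContinuousMap.dist_le dist_nonneg]
  intro x
  obtain ⟨t, p, q, ht0, ht1, _, _, hf⟩ := rep a b hab hi hL x
  rw [hf u, hf v, Real.dist_eq]
  have h1 : |u p - v p| ≤ dist u v := by
    rw [← Real.dist_eq]; exact ContinuousMap.dist_apply_le_dist p
  have h2 : |u q - v q| ≤ dist u v := by
    rw [← Real.dist_eq]; exact ContinuousMap.dist_apply_le_dist q
  have habs : |(1 - t) * u p + t * u q - ((1 - t) * v p + t * v q)| ≤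
      (1 - t) * |u p - v p| + t * |u q - v q| := by
    have : (1 - t) * u p + t * u q - ((1 - t) * v p + t * v q) =
        (1 - t) * (u p - v p) + t * (u q - v q) := by ring
    rw [this]
    calc |(1 - t) * (u p - v p) + t * (u q - v q)|
        ≤ |(1 - t) * (u p - v p)| + |t * (u q - v q)| := abs_add_le _ _
      _ = (1 - t) * |u p - v p| + t * |u q - v q| := by
          rw [abs_mul, abs_mul, abs_of_nonneg (by linarith), abs_of_nonneg ht0]
  have hb1 : (1 - t) * |u p - v p| ≤ (1 - t) * dist u v :=
    mul_le_mul_of_nonneg_left h1 (by linarith)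
  have hb2 : t * |u q - v q| ≤ t * dist u v := mul_le_mul_of_nonneg_left h2 ht0
  nlinarith [habs, hb1, hb2]

/-- The interpolation converges uniformly for a fixed `u`. -/
lemma lin_interp_approx (a b : ℝ) (hab : a < b)
    (L : ℕ → C(Set.Icc a b, ℝ) → C(Set.Icc a b, ℝ))
    (hL : ∀ i : ℕ, 0 < i → IsLinInterp a b hab.le i (L i)) (u : C(Set.Icc a b, ℝ)) :
    ∀ ε > 0, ∃ N : ℕ, 0 < N ∧ ∀ i ≥ N, dist (L i u) u < ε := by
  intro ε hε
  have hba : (0:ℝ) < b - a := by linarith [hab]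
  have hu : UniformContinuous u := CompactSpace.uniformContinuous_of_continuous u.continuous
  rw [Metric.uniformContinuous_iff] at hu
  obtain ⟨δ, hδ, hmod⟩ := hu (ε/2) (by linarith)
  obtain ⟨N₀, hN₀⟩ := exists_nat_gt ((b - a) / δ)
  refine ⟨max N₀ 1, lt_of_lt_of_le one_pos (le_max_right _ _), ?_⟩
  intro i hiN
  have hi : 0 < i := lt_of_lt_of_le one_pos (le_trans (le_max_right _ _) hiN)
  have hipos : (0:ℝ) < i := by exact_mod_cast hi
  have hsmall : (b - a) / i < δ := by
    rw [div_lt_iff₀ hipos]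
    have hNi : ((b - a) / δ) < i := by
      have h1 : (N₀ : ℝ) ≤ i := by exact_mod_cast le_trans (le_max_left _ _) hiN
      linarith
    rw [div_lt_iff₀ hδ] at hNi
    nlinarith [hNi]
  have hle : dist (L i u) u ≤ ε / 2 := by
    rw [ContinuousMap.dist_le (by linarith)]
    intro x
    obtain ⟨t, p, q, ht0, ht1, hpd, hqd, hf⟩ := rep a b hab hi (hL i hi) x
    have hup : |u p - u x| ≤ ε / 2 := by
      rw [← Real.dist_eq]
      exact (hmod (lt_of_le_of_lt hpd hsmall)).le
    have huq : |u q - u x| ≤ ε / 2 := by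
      rw [← Real.dist_eq]
      exact (hmod (lt_of_le_of_lt hqd hsmall)).le
    rw [hf u, Real.dist_eq]
    have hrw : (1 - t) * u p + t * u q - u x =
        (1 - t) * (u p - u x) + t * (u q - u x) := by ring
    rw [hrw]
    calc |(1 - t) * (u p - u x) + t * (u q - u x)|
        ≤ |(1 - t) * (u p - u x)| + |t * (u q - u x)| := abs_add_le _ _
      _ = (1 - t) * |u p - u x| + t * |u q - u x| := by
          rw [abs_mul, abs_mul, abs_of_nonneg (by linarith), abs_of_nonneg ht0]
      _ ≤ (1 - t) * (ε/2) + t * (ε/2) := by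
          have := mul_le_mul_of_nonneg_left hup (by linarith : (0:ℝ) ≤ 1 - t)
          have := mul_le_mul_of_nonneg_left huq ht0
          linarith
      _ = ε / 2 := by ring
  linarith

/-- With `U_m = L_m(V)`, `W_m = V ∪ U_m` and `W = ⋃_{i=1}^∞ W_i`, the set `W` is a
compact subset of `C([a,b])`. -/
theorem W_isCompact (a b : ℝ) (hab : a < b)
    (V : Set C(Set.Icc a b, ℝ)) (hV : IsCompact V)
    (L : ℕ → C(Set.Icc a b, ℝ) → C(Set.Icc a b, ℝ))
    (hL : ∀ i : ℕ, 0 < i → IsLinInterp a b hab.le i (L i))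
    (W : Set C(Set.Icc a b, ℝ))
    (hW : W = ⋃ i ∈ {i : ℕ | 1 ≤ i}, (V ∪ (L i) '' V)) :
    IsCompact W := by
  have hVW : V ⊆ W := by
    rw [hW]
    intro v hv
    exact Set.mem_biUnion (show (1:ℕ) ∈ {i : ℕ | 1 ≤ i} by simp) (Or.inl hv)
  have hLW : ∀ k : ℕ, 0 < k → (L k) '' V ⊆ W := by
    intro k hk
    rw [hW]
    intro v hv
    exact Set.mem_biUnion (show k ∈ {i : ℕ | 1 ≤ i} by exact hk) (Or.inr hv)
  rw [isCompact_iff_isSeqCompact]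
  intro f hf
  -- choose representation
  have key : ∀ n : ℕ, ∃ c : ℕ, ∃ v : C(Set.Icc a b, ℝ), v ∈ V ∧
      ((c = 0 ∧ f n = v) ∨ (0 < c ∧ f n = L c v)) := by
    intro n
    have := hf n
    rw [hW] at this
    simp only [Set.mem_iUnion] at this
    obtain ⟨i, hi1, hmem⟩ := this
    rcases hmem with hv | ⟨v, hvV, hveq⟩
    · exact ⟨0, f n, hv, Or.inl ⟨rfl, rfl⟩⟩
    · exact ⟨i, v, hvV, Or.inr ⟨hi1, hveq.symm⟩⟩
  choose c u huV hcase using key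
  obtain ⟨u₀, hu₀V, φ, hφ, hconv⟩ := hV.isSeqCompact huV
  by_cases hfreq : ∃ k : ℕ, ∃ᶠ n in Filter.atTop, c (φ n) = k
  · -- some index occurs infinitely often
    obtain ⟨k, hk⟩ := hfreq
    obtain ⟨ψ, hψ, hψk⟩ := Filter.extraction_of_frequently_atTop hk
    have huconv : Filter.Tendsto (fun n => u (φ (ψ n))) Filter.atTop (𝓝 u₀) :=
      hconv.comp hψ.tendsto_atTop
    rcases Nat.eq_zero_or_pos k with hk0 | hkpos
    · -- k = 0 : subsequence stays in V
      refine ⟨u₀, hVW hu₀V, φ ∘ ψ, hφ.comp hψ, ?_⟩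
      have heq : ∀ n, f (φ (ψ n)) = u (φ (ψ n)) := by
        intro n
        rcases hcase (φ (ψ n)) with ⟨_, he⟩ | ⟨hpos, _⟩
        · exact he
        · exact absurd (hψk n ▸ hpos) (by omega)
      exact huconv.congr (fun n => (heq n).symm)
    · -- k > 0 : subsequence lies in L k '' V
      refine ⟨L k u₀, hLW k hkpos ⟨u₀, hu₀V, rfl⟩, φ ∘ ψ, hφ.comp hψ, ?_⟩
      have heq : ∀ n, f (φ (ψ n)) = L k (u (φ (ψ n))) := by
        intro n
        rcases hcase (φ (ψ n)) with ⟨h0, _⟩ | ⟨_, he⟩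
        · exact absurd (hψk n ▸ hkpos) (by omega)
        · rw [he, hψk n]
      rw [tendsto_iff_dist_tendsto_zero]
      refine squeeze_zero' (g := fun n => dist (u (φ (ψ n))) u₀)
        (Filter.Eventually.of_forall fun n => dist_nonneg) ?_ ?_
      · refine Filter.Eventually.of_forall fun n => ?_
        show dist (f (φ (ψ n))) (L k u₀) ≤ dist (u (φ (ψ n))) u₀
        rw [heq n]
        exact lin_interp_lipschitz a b hab hkpos (hL k hkpos) _ _
      · rw [← tendsto_iff_dist_tendsto_zero]
        exact huconv
  · -- indices tend to infinity
    push_neg at hfreq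
    have htop : Filter.Tendsto (fun n => c (φ n)) Filter.atTop Filter.atTop := by
      rw [Filter.tendsto_atTop]
      intro K
      have hall : ∀ᶠ n in Filter.atTop, ∀ j ∈ Finset.range K, c (φ n) ≠ j :=
        Filter.eventually_all_finset (Finset.range K) |>.2 fun j _ => hfreq j
      filter_upwards [hall] with n hn
      by_contra hcon
      exact hn (c (φ n)) (Finset.mem_range.2 (Nat.lt_of_not_le hcon)) rfl
    have hpos : ∀ᶠ n in Filter.atTop, 0 < c (φ n) := htop.eventually_gt_atTop 0
    refine ⟨u₀, hVW hu₀V, φ, hφ, ?_⟩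
    rw [tendsto_iff_dist_tendsto_zero]
    have hD : Filter.Tendsto (fun i => dist (L i u₀) u₀) Filter.atTop (𝓝 0) := by
      rw [Metric.tendsto_atTop]
      intro ε hε
      obtain ⟨N, _, hN⟩ := lin_interp_approx a b hab L hL u₀ ε hε
      refine ⟨N, fun n hn => ?_⟩
      rw [Real.dist_eq, sub_zero, abs_of_nonneg dist_nonneg]
      exact hN n hn
    refine squeeze_zero' (Filter.Eventually.of_forall fun n => dist_nonneg)
      (g := fun n => dist (u (φ n)) u₀ + dist (L (c (φ n)) u₀) u₀) ?_ ?_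
    · filter_upwards [hpos] with n hn
      rcases hcase (φ n) with ⟨h0, _⟩ | ⟨_, he⟩
      · omega
      · calc dist (f (φ n)) u₀ ≤ dist (f (φ n)) (L (c (φ n)) u₀) + dist (L (c (φ n)) u₀) u₀ :=
              dist_triangle _ _ _
          _ ≤ dist (u (φ n)) u₀ + dist (L (c (φ n)) u₀) u₀ := by
              gcongr ?_ + _
              rw [he]
              exact lin_interp_lipschitz a b hab hn (hL _ hn) _ _
    · have h1 : Filter.Tendsto (fun n => dist (u (φ n)) u₀) Filter.atTop (𝓝 0) := by
        rw [← tendsto_iff_dist_tendsto_zero]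
        exact hconv
      have h2 : Filter.Tendsto (fun n => dist (L (c (φ n)) u₀) u₀) Filter.atTop (𝓝 0) :=
        hD.comp htop
      simpa using h1.add h2
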